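/- The distribution of the generating operator is the semicircle law of variance N: with T = Σ_{j=1}^{N} (L_j + L_j*), for every natural number n one has ⟨T^n δ_e, δ_e⟩ = (1/(2πN)) ∫_{-2√N}^{2√N} t^n √(4N − t²) dt. -/

import Mathlib

noncomputable section

/-- The Hilbert space `ℓ²(FreeMonoid (Fin N), ℂ)`. -/
abbrev FMH (N : ℕ) : Type := lp (fun _ : FreeMonoid (Fin N) => ℂ) 2

/-- The standard orthonormal basis vector `δ_w` at the word `w`. -/
noncomputable def delta (N : ℕ) (w : FreeMonoid (Fin N)) : FMH N :=
  letI : DecidableEq (FreeMonoid (Fin N)) := Classical.decEq _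
  lp.single 2 w 1

open scoped Classical
open Real intervalIntegral



variable {N : ℕ}

lemma delta_apply (w h : FreeMonoid (Fin N)) :
    (delta N w : ∀ _ : FreeMonoid (Fin N), ℂ) h = if h = w then 1 else 0 := by
  simp [delta, lp.single_apply, Pi.single_apply]

lemma inner_delta_left (w : FreeMonoid (Fin N)) (f : FMH N) :
    (inner ℂ (delta N w) f : ℂ) = f w := by
  simp [delta, lp.inner_single_left]

lemma inner_delta_delta (w h : FreeMonoid (Fin N)) :
    (inner ℂ (delta N w) (delta N h) : ℂ) = if w = h then 1 else 0 := by
  rw [inner_delta_left, delta_apply]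

lemma fmh_ext {x y : FMH N} (h : ∀ w, (inner ℂ (delta N w) x : ℂ) = inner ℂ (delta N w) y) :
    x = y := by
  refine lp.ext (funext fun w => ?_)
  simpa [inner_delta_left] using h w

/-- Sum of deltas over all words of length `m`. -/
noncomputable def FF (N m : ℕ) : FMH N :=
  ∑ v : Fin m → Fin N, delta N (FreeMonoid.ofList (List.ofFn v))

lemma FF_zero : FF N 0 = delta N 1 := by
  simp [FF]

lemma word_cons {m : ℕ} (v : Fin (m + 1) → Fin N) :
    FreeMonoid.ofList (List.ofFn v) =
      FreeMonoid.of (v 0) * FreeMonoid.ofList (List.ofFn fun i => v i.succ) := by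
  rw [List.ofFn_succ (f := v)]
  rfl

lemma sum_reindex {M : Type*} [AddCommMonoid M] (f : FreeMonoid (Fin N) → M) (m : ℕ) :
    ∑ j : Fin N, ∑ v : Fin m → Fin N, f (FreeMonoid.of j * FreeMonoid.ofList (List.ofFn v)) =
      ∑ v : Fin (m + 1) → Fin N, f (FreeMonoid.ofList (List.ofFn v)) := by
  rw [show (∑ j : Fin N, ∑ v : Fin m → Fin N,
      f (FreeMonoid.of j * FreeMonoid.ofList (List.ofFn v))) =
      ∑ p : Fin N × (Fin m → Fin N),
        f (FreeMonoid.of p.1 * FreeMonoid.ofList (List.ofFn p.2)) from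
    (Fintype.sum_prod_type (fun p : Fin N × (Fin m → Fin N) =>
      f (FreeMonoid.of p.1 * FreeMonoid.ofList (List.ofFn p.2)))).symm]
  refine Fintype.sum_equiv (Fin.consEquiv fun _ : Fin (m + 1) => Fin N) _ _ fun p => ?_
  congr 1
  show FreeMonoid.of (p.1) * FreeMonoid.ofList (List.ofFn p.2) =
    FreeMonoid.ofList (List.ofFn (Fin.cons p.1 p.2))
  rw [List.ofFn_succ (f := Fin.cons p.1 p.2)]
  simp

lemma inner_FF_delta_one (m : ℕ) :
    (inner ℂ (FF N m) (delta N 1) : ℂ) = if m = 0 then 1 else 0 := by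
  rw [FF, sum_inner]
  rcases Nat.eq_zero_or_pos m with hm | hm
  · subst hm; simp [-inner_self_eq_norm_sq_to_K, inner_delta_delta]
  · rw [if_neg (by omega)]
    refine Finset.sum_eq_zero fun v _ => ?_
    rw [inner_delta_delta, if_neg]
    intro h
    have := congrArg (List.length ∘ FreeMonoid.toList) h
    simp at this
    omega

variable (L : FreeMonoid (Fin N) → (FMH N →L[ℂ] FMH N))
  (hL : ∀ w h : FreeMonoid (Fin N), L w (delta N h) = delta N (w * h))

include hL in
lemma adj_delta_nil (j : Fin N) :
    ContinuousLinearMap.adjoint (L (FreeMonoid.of j)) (delta N 1) = 0 := by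
  refine fmh_ext fun w => ?_
  rw [ContinuousLinearMap.adjoint_inner_right, hL, inner_delta_delta]
  have : FreeMonoid.of j * w ≠ 1 := by
    intro h
    have := congrArg (List.length ∘ FreeMonoid.toList) h
    simp at this
  simp [this]

include hL in
lemma adj_delta_cons (j i : Fin N) (t : FreeMonoid (Fin N)) :
    ContinuousLinearMap.adjoint (L (FreeMonoid.of j)) (delta N (FreeMonoid.of i * t)) =
      if i = j then delta N t else 0 := by
  refine fmh_ext fun w => ?_
  rw [ContinuousLinearMap.adjoint_inner_right, hL, inner_delta_delta]
  have hiff : FreeMonoid.of j * w = FreeMonoid.of i * t ↔ (i = j ∧ w = t) := by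
    constructor
    · intro h
      have h' := congrArg FreeMonoid.toList h
      simp [FreeMonoid.toList_of_mul] at h'
      exact ⟨h'.1.symm, FreeMonoid.toList.injective h'.2⟩
    · rintro ⟨rfl, rfl⟩; rfl
  by_cases hij : i = j
  · subst hij
    simp only [hiff, if_pos rfl, inner_delta_delta]
    by_cases hw : w = t <;> simp [-inner_self_eq_norm_sq_to_K, hw, eq_comm, inner_delta_delta]
  · simp only [if_neg hij]
    have : ¬ (FreeMonoid.of j * w = FreeMonoid.of i * t) := fun h => hij ((hiff.mp h).1)
    simp [this, inner_zero_right]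

/-- The generating operator. -/
noncomputable def TT (L : FreeMonoid (Fin N) → (FMH N →L[ℂ] FMH N)) : FMH N →L[ℂ] FMH N :=
  ∑ j : Fin N, (L (FreeMonoid.of j) + ContinuousLinearMap.adjoint (L (FreeMonoid.of j)))

include hL in
lemma T_FF_zero : TT L (FF N 0) = FF N 1 := by
  rw [FF_zero, TT, ContinuousLinearMap.sum_apply]
  have : ∀ j : Fin N,
      (L (FreeMonoid.of j) + ContinuousLinearMap.adjoint (L (FreeMonoid.of j))) (delta N 1)
        = delta N (FreeMonoid.of j * 1) := by
    intro j
    rw [ContinuousLinearMap.add_apply, hL, adj_delta_nil L hL, add_zero]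
  rw [Finset.sum_congr rfl fun j _ => this j]
  have h0 := sum_reindex (N := N) (fun w => delta N w) 0
  rw [show (∑ j : Fin N, delta N (FreeMonoid.of j * 1)) =
      ∑ j : Fin N, ∑ v : Fin 0 → Fin N,
        delta N (FreeMonoid.of j * FreeMonoid.ofList (List.ofFn v)) by
    refine Finset.sum_congr rfl fun j _ => ?_
    simp]
  rw [h0]
  rfl

include hL in
lemma T_FF_succ (m : ℕ) :
    TT L (FF N (m + 1)) = FF N (m + 2) + (N : ℂ) • FF N m := by
  rw [TT, ContinuousLinearMap.sum_apply]
  have expand : ∀ j : Fin N,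
      (L (FreeMonoid.of j) + ContinuousLinearMap.adjoint (L (FreeMonoid.of j))) (FF N (m + 1))
        = (∑ v : Fin (m + 1) → Fin N,
            delta N (FreeMonoid.of j * FreeMonoid.ofList (List.ofFn v)))
          + ∑ v : Fin (m + 1) → Fin N,
              (if v 0 = j then delta N (FreeMonoid.ofList (List.ofFn fun i => v i.succ)) else 0) := by
    intro j
    rw [ContinuousLinearMap.add_apply, FF, map_sum, map_sum]
    congr 1
    · exact Finset.sum_congr rfl fun v _ => hL _ _
    · refine Finset.sum_congr rfl fun v _ => ?_
      rw [word_cons v, adj_delta_cons L hL]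
  rw [Finset.sum_congr rfl fun j _ => expand j, Finset.sum_add_distrib]
  congr 1
  · rw [sum_reindex (N := N) (fun w => delta N w) (m + 1)]
    rfl
  · rw [Finset.sum_comm]
    have step1 : ∀ v : Fin (m + 1) → Fin N,
        (∑ j : Fin N, if v 0 = j then
            delta N (FreeMonoid.ofList (List.ofFn fun i => v i.succ)) else 0)
          = delta N (FreeMonoid.ofList (List.ofFn fun i => v i.succ)) := by
      intro v
      simp
    rw [Finset.sum_congr rfl fun v _ => step1 v]
    have step2 : (∑ v : Fin (m + 1) → Fin N,
          delta N (FreeMonoid.ofList (List.ofFn fun i => v i.succ)))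
        = ∑ p : Fin N × (Fin m → Fin N), delta N (FreeMonoid.ofList (List.ofFn p.2)) := by
      refine (Fintype.sum_equiv (Fin.consEquiv fun _ : Fin (m + 1) => Fin N)
        (fun p : Fin N × (Fin m → Fin N) => delta N (FreeMonoid.ofList (List.ofFn p.2)))
        _ fun p => ?_).symm
      congr 1
    rw [step2, Fintype.sum_prod_type]
    show (∑ _j : Fin N, FF N m) = (N : ℂ) • FF N m
    rw [Finset.sum_const, Finset.card_univ, Fintype.card_fin]
    exact (Nat.cast_smul_eq_nsmul ℂ N (FF N m)).symm

/-- Coefficients of `T^n δ_e` in terms of the `FF m`. -/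
def aa (N : ℕ) : ℕ → ℕ → ℝ
  | 0, m => if m = 0 then 1 else 0
  | n+1, 0 => N * aa N n 1
  | n+1, m+1 => aa N n m + N * aa N n (m + 2)

lemma aa_vanish : ∀ n m, n < m → aa N n m = 0 := by
  intro n
  induction n with
  | zero => intro m hm; simp [aa]; omega
  | succ n ih =>
    intro m hm
    match m, hm with
    | m+1, hm =>
      rw [aa, ih m (by omega), ih (m+2) (by omega)]
      ring

/-- previous-level vector -/
noncomputable def FP (N : ℕ) : ℕ → FMH N
  | 0 => 0
  | m+1 => FF N m

include hL in
lemma T_FF (m : ℕ) : TT L (FF N m) = FF N (m + 1) + (N : ℂ) • FP N m := by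
  cases m with
  | zero => rw [T_FF_zero L hL]; simp [FP]
  | succ m => rw [T_FF_succ L hL]; rfl

lemma aa_succ (n m : ℕ) :
    aa N (n + 1) m = (if m = 0 then 0 else aa N n (m - 1)) + N * aa N n (m + 1) := by
  cases m with
  | zero => rw [aa]; simp
  | succ m => rw [aa]; simp

include hL in
lemma T_pow (n : ℕ) :
    ((TT L) ^ n) (delta N 1) =
      ∑ m ∈ Finset.range (n + 1), ((aa N n m : ℝ) : ℂ) • FF N m := by
  induction n with
  | zero => simp [aa, FF_zero]; exact (one_smul ℂ _).symm
  | succ n ih =>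
    rw [pow_succ', ContinuousLinearMap.mul_apply, ih, map_sum]
    have expand : ∀ m, TT L (((aa N n m : ℝ) : ℂ) • FF N m)
        = ((aa N n m : ℝ) : ℂ) • FF N (m + 1)
          + ((aa N n m : ℝ) : ℂ) • ((N : ℂ) • FP N m) := by
      intro m
      rw [map_smul, T_FF L hL m, smul_add]
    rw [Finset.sum_congr rfl fun m _ => expand m, Finset.sum_add_distrib]
    have coeff : ∀ m, ((aa N (n + 1) m : ℝ) : ℂ) • FF N m
        = (if m = 0 then 0 else ((aa N n (m - 1) : ℝ) : ℂ)) • FF N m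
          + ((N * aa N n (m + 1) : ℝ) : ℂ) • FF N m := by
      intro m
      rw [← add_smul, aa_succ]
      cases m with
      | zero => push_cast; ring_nf
      | succ m => push_cast; ring_nf
    rw [Finset.sum_congr rfl fun m _ => coeff m, Finset.sum_add_distrib]
    congr 1
    · rw [Finset.sum_range_succ'
        (fun m => (if m = 0 then 0 else ((aa N n (m - 1) : ℝ) : ℂ)) • FF N m) (n + 1)]
      simp
    · rw [Finset.sum_range_succ (fun m => ((N * aa N n (m + 1) : ℝ) : ℂ) • FF N m) (n + 1),
        Finset.sum_range_succ (fun m => ((N * aa N n (m + 1) : ℝ) : ℂ) • FF N m) n,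
        aa_vanish n (n + 2) (by omega), aa_vanish n (n + 1) (by omega)]
      rw [Finset.sum_range_succ'
        (fun m => ((aa N n m : ℝ) : ℂ) • ((N : ℂ) • FP N m)) n]
      simp only [FP, smul_smul]
      push_cast
      have : ∀ m, ((N : ℂ) * (aa N n (m + 1) : ℂ)) • FF N m
          = ((aa N n (m + 1) : ℂ) * (N : ℂ)) • FF N m := fun m => by ring_nf
      simp [this, mul_comm]

include hL in
lemma inner_T_pow (n : ℕ) :
    (inner ℂ (((TT L) ^ n) (delta N 1)) (delta N 1) : ℂ) = ((aa N n 0 : ℝ) : ℂ) := by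
  rw [T_pow L hL n, sum_inner]
  have : ∀ m, (inner ℂ (((aa N n m : ℝ) : ℂ) • FF N m) (delta N 1) : ℂ)
      = ((aa N n m : ℝ) : ℂ) * (if m = 0 then 1 else 0) := by
    intro m
    rw [inner_smul_left, inner_FF_delta_one]
    simp [Complex.conj_ofReal]
  rw [Finset.sum_congr rfl fun m _ => this m]
  rw [Finset.sum_congr rfl fun m _ => (mul_ite (m = 0) ((aa N n m : ℝ) : ℂ) 1 0)]
  simp


/-- Ballot-path counts. -/
def bb : ℕ → ℕ → ℝ
  | 0, m => if m = 0 then 1 else 0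
  | n+1, 0 => bb n 1
  | n+1, m+1 => bb n m + bb n (m+2)

/-- Closed form for `bb`. -/
def ff (n m : ℕ) : ℝ :=
  if m ≤ n ∧ (n - m) % 2 = 0 then
    (Nat.choose n ((n-m)/2) : ℝ) -
      (if (n-m)/2 = 0 then 0 else (Nat.choose n ((n-m)/2 - 1) : ℝ))
  else 0

lemma ff_of (n m k : ℕ) (h : n = m + 2 * k) :
    ff n m = (Nat.choose n k : ℝ) - (if k = 0 then 0 else (Nat.choose n (k-1) : ℝ)) := by
  have h1 : m ≤ n := by omega
  have h3 : (n - m) / 2 = k := by omega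
  rw [ff, if_pos (⟨h1, by omega⟩ : m ≤ n ∧ (n - m) % 2 = 0), h3]

lemma ff_zero (n m : ℕ) (h : ∀ k, n ≠ m + 2 * k) : ff n m = 0 := by
  rw [ff, if_neg]
  rintro ⟨h1, h2⟩
  exact h ((n - m) / 2) (by omega)

lemma pascal (n j : ℕ) (hj : 1 ≤ j) :
    Nat.choose (n+1) j = Nat.choose n (j-1) + Nat.choose n j := by
  have h := Nat.choose_succ_succ n (j-1)
  rw [show (j-1).succ = j by omega] at h
  rw [show n.succ = n + 1 from rfl] at h
  rw [h]

lemma bb_eq_ff : ∀ n m, bb n m = ff n m := by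
  intro n
  induction n with
  | zero =>
    intro m
    cases m with
    | zero => rw [bb, ff_of 0 0 0 rfl]; simp
    | succ m =>
      rw [bb, ff_zero 0 (m+1) (fun k => by omega)]
      simp
  | succ n ih =>
    intro m
    cases m with
    | zero =>
      rw [bb, ih 1]
      rcases Nat.even_or_odd (n + 1) with he | ho
      · obtain ⟨k, hk⟩ := he
        have hkpos : 1 ≤ k := by omega
        rw [ff_of n 1 (k-1) (by omega), ff_of (n+1) 0 k (by omega)]
        rcases Nat.eq_or_lt_of_le hkpos with h1 | h2
        · have hn : n = 1 := by omega
          subst hn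
          rw [show k = 1 from by omega]
          norm_num
        · rw [if_neg (by omega), if_neg (by omega),
            pascal n k (by omega), pascal n (k-1) (by omega)]
          have sym : Nat.choose n k = Nat.choose n (k-1) := by
            have hnk : n - k = k - 1 := by omega
            rw [← hnk, Nat.choose_symm (by omega)]
          rw [show k - 1 - 1 = k - 2 by omega, sym]
          push_cast
          ring
      · obtain ⟨k, hk⟩ := ho
        rw [ff_zero (n+1) 0 (by omega), ff_zero n 1 (by omega)]
    | succ m =>
      rw [bb, ih m, ih (m+2)]
      by_cases hmn : m ≤ n
      · rcases Nat.even_or_odd (n - m) with he | ho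
        · obtain ⟨k, hk⟩ := he
          have hk' : n = m + 2 * k := by omega
          rcases Nat.eq_zero_or_pos k with h0 | hkpos
          · subst h0
            rw [ff_of n m 0 (by omega), ff_zero n (m+2) (by omega),
              ff_of (n+1) (m+1) 0 (by omega)]
            simp
          · rcases Nat.eq_or_lt_of_le hkpos with h1 | h2
            · rw [ff_of n m 1 (by omega), ff_of n (m+2) 0 (by omega),
                ff_of (n+1) (m+1) 1 (by omega)]
              norm_num
            · rw [ff_of n m k (by omega), ff_of n (m+2) (k-1) (by omega),
                ff_of (n+1) (m+1) k (by omega)]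
              rw [if_neg (by omega), if_neg (by omega), if_neg (by omega),
                pascal n k (by omega), pascal n (k-1) (by omega),
                show k - 1 - 1 = k - 2 by omega]
              push_cast
              ring
        · obtain ⟨k, hk⟩ := ho
          rw [ff_zero n m (by omega), ff_zero n (m+2) (by omega),
            ff_zero (n+1) (m+1) (by omega)]
          ring
      · rw [ff_zero n m (by omega), ff_zero n (m+2) (by omega),
          ff_zero (n+1) (m+1) (by omega)]
        ring

lemma bb_even (k : ℕ) : bb (2 * k) 0 = catalan k := by
  rw [bb_eq_ff, ff_of (2*k) 0 k (by omega)]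
  rcases Nat.eq_zero_or_pos k with h0 | hpos
  · subst h0; simp
  · rw [if_neg (by omega)]
    have key : Nat.choose (2*k) k * k = Nat.choose (2*k) (k-1) * (k+1) := by
      have := Nat.choose_succ_right_eq (2*k) (k-1)
      rw [show k - 1 + 1 = k by omega] at this
      rw [this, show 2*k - (k-1) = k+1 by omega]
    have hcb : Nat.choose (2*k) k = (k + 1) * catalan k := by
      rw [show (k+1) * catalan k = Nat.centralBinom k from succ_mul_catalan_eq_centralBinom k,
        Nat.centralBinom]
    have hk1 : ((k : ℝ) + 1) ≠ 0 := by positivity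
    have keyR : (Nat.choose (2*k) k : ℝ) * k = (Nat.choose (2*k) (k-1) : ℝ) * ((k:ℝ)+1) := by
      exact_mod_cast congrArg (Nat.cast : ℕ → ℝ) key
    have hcbR : (Nat.choose (2*k) k : ℝ) = ((k:ℝ) + 1) * (catalan k : ℝ) := by
      exact_mod_cast congrArg (Nat.cast : ℕ → ℝ) hcb
    refine mul_left_cancel₀ hk1 ?_
    calc ((k:ℝ)+1) * ((Nat.choose (2*k) k : ℝ) - (Nat.choose (2*k) (k-1) : ℝ))
        = ((k:ℝ)+1) * (Nat.choose (2*k) k : ℝ)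
          - (Nat.choose (2*k) (k-1) : ℝ) * ((k:ℝ)+1) := by ring
      _ = ((k:ℝ)+1) * (Nat.choose (2*k) k : ℝ) - (Nat.choose (2*k) k : ℝ) * k := by
          rw [← keyR]
      _ = (Nat.choose (2*k) k : ℝ) := by ring
      _ = ((k:ℝ)+1) * (catalan k : ℝ) := by rw [hcbR]

lemma bb_odd (k : ℕ) : bb (2 * k + 1) 0 = 0 := by
  rw [bb_eq_ff, ff_zero (2*k+1) 0 (by omega)]

lemma bb_vanish (n m : ℕ) (h : n < m) : bb n m = 0 := by
  rw [bb_eq_ff, ff_zero n m (fun k => by omega)]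


lemma aa_eq_bb (N : ℕ) : ∀ n m, aa N n m = (Real.sqrt N) ^ (n - m) * bb n m := by
  have hsq : (Real.sqrt N) ^ 2 = (N : ℝ) := Real.sq_sqrt (by positivity)
  intro n
  induction n with
  | zero =>
    intro m
    cases m with
    | zero => rw [aa, bb]; norm_num
    | succ m => rw [aa, bb]; norm_num
  | succ n ih =>
    intro m
    cases m with
    | zero =>
      rw [aa, bb, ih 1]
      rcases Nat.eq_zero_or_pos n with h0 | hpos
      · subst h0
        rw [bb_vanish 0 1 (by omega)]
        ring
      · rw [show n + 1 - 0 = (n - 1) + 2 by omega, pow_add, hsq]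
        ring
    | succ m =>
      rw [aa, bb, ih m, ih (m+2)]
      rw [show n + 1 - (m + 1) = n - m by omega]
      rcases le_or_gt (m + 2) n with hle | hgt
      · rw [show n - m = (n - (m+2)) + 2 by omega, pow_add, hsq]
        ring
      · rw [bb_vanish n (m+2) (by omega)]
        rcases le_or_gt m n with h1 | h2
        · ring
        · rw [bb_vanish n m (by omega)]
          ring

lemma aa_even (N k : ℕ) : aa N (2 * k) 0 = (N : ℝ) ^ k * catalan k := by
  rw [aa_eq_bb, bb_even, Nat.sub_zero, pow_mul, Real.sq_sqrt (by positivity : (0:ℝ) ≤ (N:ℝ))]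

lemma aa_odd (N k : ℕ) : aa N (2 * k + 1) 0 = 0 := by
  rw [aa_eq_bb, bb_odd, mul_zero]


lemma odd_integral (a : ℝ) (f : ℝ → ℝ) (hf : ∀ x, f (-x) = - f x) :
    ∫ x in (-a)..a, f x = 0 := by
  have h := intervalIntegral.integral_comp_neg (a := -a) (b := a) f
  rw [neg_neg] at h
  have h2 : (∫ x in (-a)..a, f (-x)) = ∫ x in (-a)..a, (-(f x)) := by
    simp only [hf]
  rw [h2, intervalIntegral.integral_neg] at h
  linarith

lemma sin_pow_int : ∀ k : ℕ,
    (∫ x in (-(π/2))..(π/2), sin x ^ (2*k)) = π * Nat.centralBinom k / 4^k := by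
  intro k
  induction k with
  | zero => simp [Nat.centralBinom]
  | succ k ih =>
    have h := integral_sin_pow (a := -(π/2)) (b := π/2) (n := 2*k)
    rw [show 2*k+2 = 2*(k+1) by ring] at h
    rw [h, ih]
    rw [Real.cos_pi_div_two, show Real.cos (-(π/2)) = 0 by
      rw [Real.cos_neg, Real.cos_pi_div_two]]
    have hcb : ((k:ℝ) + 1) * (Nat.centralBinom (k+1) : ℝ)
        = 2 * (2*(k:ℝ)+1) * (Nat.centralBinom k : ℝ) := by
      exact_mod_cast congrArg (Nat.cast : ℕ → ℝ) (Nat.succ_mul_centralBinom_succ k)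
    have hk1 : ((k:ℝ)+1) ≠ 0 := by positivity
    have h4 : (4:ℝ)^(k+1) ≠ 0 := by positivity
    have h4k : (4:ℝ)^k ≠ 0 := by positivity
    field_simp
    push_cast
    linear_combination (-2*π*(4:ℝ)^k) * hcb

lemma even_integral (N k : ℕ) (hN : 0 < N) :
    (∫ t in (-(2 * Real.sqrt N))..(2 * Real.sqrt N),
        t ^ (2*k) * Real.sqrt (4 * N - t ^ 2))
      = 2 * π * (N:ℝ)^(k+1) * catalan k := by
  set r : ℝ := 2 * Real.sqrt N with hr
  clear_value r
  have hrpos : 0 < r := by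
    have h0 : 0 < Real.sqrt N := Real.sqrt_pos.mpr (by exact_mod_cast hN)
    rw [hr]; linarith
  have hr2 : r ^ 2 = 4 * N := by
    rw [hr, mul_pow, Real.sq_sqrt (by positivity : (0:ℝ) ≤ (N:ℝ))]
    ring
  set g : ℝ → ℝ := fun t => t ^ (2*k) * Real.sqrt (4 * N - t ^ 2) with hg
  have hgc : Continuous g := by
    apply Continuous.mul (continuous_pow _)
    exact Real.continuous_sqrt.comp (continuous_const.sub (continuous_pow 2))
  have hderiv : ∀ x ∈ Set.uIcc (-(π/2)) (π/2),
      HasDerivAt (fun θ => r * Real.sin θ) (r * Real.cos x) x := by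
    intro x _
    exact (Real.hasDerivAt_sin x).const_mul r
  have hcont : ContinuousOn (fun x => r * Real.cos x) (Set.uIcc (-(π/2)) (π/2)) := by
    exact (continuous_const.mul Real.continuous_cos).continuousOn
  have hsub := intervalIntegral.integral_comp_smul_deriv hderiv hcont hgc
  rw [Real.sin_pi_div_two, show Real.sin (-(π/2)) = -1 by
      rw [Real.sin_neg, Real.sin_pi_div_two], mul_one,
    show r * (-1) = -r by ring] at hsub
  rw [← hsub]
  have congr1 : ∀ x ∈ Set.uIcc (-(π/2)) (π/2),
      (r * Real.cos x) • g (r * Real.sin x)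
        = r^(2*k+2) * (Real.sin x ^ (2*k) - Real.sin x ^ (2*(k+1))) := by
    intro x hx
    rw [Set.uIcc_of_le (by linarith [Real.pi_pos]) ] at hx
    have hcos : 0 ≤ Real.cos x := Real.cos_nonneg_of_mem_Icc (by
      constructor
      · exact hx.1
      · exact hx.2)
    have hsqrt : Real.sqrt (4 * N - (r * Real.sin x) ^ 2) = r * Real.cos x := by
      have : 4 * (N:ℝ) - (r * Real.sin x) ^ 2 = (r * Real.cos x) ^ 2 := by
        rw [mul_pow, mul_pow, hr2]
        linear_combination (-(4:ℝ) * (N:ℝ)) * Real.sin_sq_add_cos_sq x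
      rw [this, Real.sqrt_sq (by positivity)]
    rw [hg]
    simp only [smul_eq_mul]
    rw [hsqrt]
    have hcossq : Real.cos x ^ 2 = 1 - Real.sin x ^ 2 := Real.cos_sq' x
    rw [show 2*(k+1) = 2*k+2 by ring]
    linear_combination (r^(2*k+2) * Real.sin x^(2*k)) * hcossq
  simp only [Function.comp_apply]
  rw [intervalIntegral.integral_congr congr1]
  rw [intervalIntegral.integral_const_mul]
  have hint1 : IntervalIntegrable (fun x => Real.sin x ^ (2*k)) MeasureTheory.volume
      (-(π/2)) (π/2) := (Real.continuous_sin.pow _).intervalIntegrable _ _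
  have hint2 : IntervalIntegrable (fun x => Real.sin x ^ (2*(k+1))) MeasureTheory.volume
      (-(π/2)) (π/2) := (Real.continuous_sin.pow _).intervalIntegrable _ _
  rw [intervalIntegral.integral_sub hint1 hint2, sin_pow_int k, sin_pow_int (k+1)]
  -- now pure arithmetic
  have hcb : ((k:ℝ) + 1) * (Nat.centralBinom (k+1) : ℝ)
      = 2 * (2*(k:ℝ)+1) * (Nat.centralBinom k : ℝ) := by
    exact_mod_cast congrArg (Nat.cast : ℕ → ℝ) (Nat.succ_mul_centralBinom_succ k)
  have hcat : (Nat.centralBinom k : ℝ) = ((k:ℝ)+1) * (catalan k : ℝ) := by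
    exact_mod_cast congrArg (Nat.cast : ℕ → ℝ) (succ_mul_catalan_eq_centralBinom k).symm
  have hrpow : r^(2*k+2) = 4^(k+1) * (N:ℝ)^(k+1) := by
    rw [show 2*k+2 = 2*(k+1) by ring, pow_mul, hr2]
    rw [mul_pow]
  have hk1 : ((k:ℝ)+1) ≠ 0 := by positivity
  have h4 : (4:ℝ)^(k+1) ≠ 0 := by positivity
  have h4k : (4:ℝ)^k ≠ 0 := by positivity
  have hcb1 : (Nat.centralBinom (k+1) : ℝ) = 2*(2*(k:ℝ)+1) * (catalan k : ℝ) := by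
    apply mul_left_cancel₀ hk1
    rw [hcb, hcat]; ring
  rw [hrpow, hcb1, hcat]
  field_simp
  ring


lemma aa_eq_integral (N n : ℕ) (hN : 0 < N) :
    (aa N n 0 : ℝ) = (1 / (2 * Real.pi * N)) *
      ∫ t in (-(2 * Real.sqrt N))..(2 * Real.sqrt N),
        t ^ n * Real.sqrt (4 * N - t ^ 2) := by
  have hπ := Real.pi_ne_zero
  have hNR : ((N:ℝ)) ≠ 0 := by positivity
  rcases Nat.even_or_odd n with ⟨k, hk⟩ | ⟨k, hk⟩
  · rw [show n = 2*k by omega]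
    rw [even_integral N k hN, aa_even]
    field_simp
    ring
  · rw [show n = 2*k+1 by omega, aa_odd]
    rw [odd_integral (2 * Real.sqrt N) (fun t => t ^ (2*k+1) * Real.sqrt (4 * N - t ^ 2))
      (fun x => by
        have h1 : (-x) ^ (2*k+1) = -(x ^ (2*k+1)) := Odd.neg_pow ⟨k, by ring⟩ x
        show (-x) ^ (2*k+1) * Real.sqrt (4 * N - (-x) ^ 2)
          = -(x ^ (2*k+1) * Real.sqrt (4 * N - x ^ 2))
        rw [h1, neg_sq]
        ring)]
    simp

/-- The distribution of the generating operator `T = Σ_j (L_j + L_j*)` is the semicircle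
law of variance `N`:
`⟨T^n δ_e, δ_e⟩ = (1/(2πN)) ∫_{-2√N}^{2√N} tⁿ √(4N − t²) dt` for all `n`. -/
theorem generating_operator_semicircle_law (N : ℕ) (hN : 0 < N)
    (L : FreeMonoid (Fin N) → (FMH N →L[ℂ] FMH N))
    (hL : ∀ w h : FreeMonoid (Fin N), L w (delta N h) = delta N (w * h))
    (n : ℕ) :
    (inner ℂ
        (((∑ j : Fin N, (L (FreeMonoid.of j) + ContinuousLinearMap.adjoint (L (FreeMonoid.of j))))
            ^ n) (delta N 1))
        (delta N 1) : ℂ) =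
      ((1 / (2 * Real.pi * N)) *
        ∫ t in (-(2 * Real.sqrt N))..(2 * Real.sqrt N),
          t ^ n * Real.sqrt (4 * N - t ^ 2) : ℝ) := by
  show (inner ℂ (((TT L) ^ n) (delta N 1)) (delta N 1) : ℂ) = _
  rw [inner_T_pow L hL n]
  exact_mod_cast congrArg Complex.ofReal (aa_eq_integral N n hN)
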